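/- Let k > 0 and let f, g : [0, k] → ℝ be twice continuously differentiable with f'(s)² + g'(s)² = 1 and g'(s) ≠ 0 for all s ∈ [0, k]. Let α ∈ ℝ and set f̄ = cos α·f + sin α·g, ḡ = cos α·g − sin α·f. Fix t, t̂ ∈ (−1, 1) and let p_t and p̄_{t̂} be the T-deformed curves of (f, g) and (f̄, ḡ), respectively. Define D(s) = (1−t²)·f'(s)² + g'(s)², D̂(s) = (1−t̂²)·f̄'(s)² + ḡ'(s)², K₁(s) = f'(s)·g''(s) − f''(s)·g'(s), and K₂(s) = t̂²·(t²−1)·(sin α·f'(s) − cos α·g'(s))² + t²·(1−t̂²)·g'(s)². Then for all s ∈ [0, k]: (‖p_t''(s)‖² − ‖p̄_{t̂}''(s)‖²)·D(s)·D̂(s) = K₁(s)²·K₂(s). In particular, the curvature functions of p_t and p̄_{t̂} coincide on [0, k] if and only if K₁(s)²·K₂(s) = 0 for all s ∈ [0, k]. -/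

import Mathlib

/-- The isometric deformation of T-type of a planar profile curve
`s ↦ (f s, g s)` with deformation parameter `t`, as a curve in the Euclidean
plane (modelled as `WithLp 2 (ℝ × ℝ)` so that `‖·‖` is the Euclidean norm). -/
noncomputable def Tdeform (f g : ℝ → ℝ) (t : ℝ) : ℝ → WithLp 2 (ℝ × ℝ) :=
  fun s => (WithLp.equiv 2 (ℝ × ℝ)).symm
    (t * f s,
      ∫ u in (0 : ℝ)..s,
        Real.sqrt ((1 - t ^ 2) * deriv f u ^ 2 + deriv g u ^ 2))

/-- Auxiliary computation: squared norm of the second derivative of the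
T-deformation, multiplied by the denominator. -/
lemma tdeform_norm_sq (f g : ℝ → ℝ) (hf : ContDiff ℝ 2 f) (hg : ContDiff ℝ 2 g)
    (t : ℝ) (s : ℝ)
    (hDpos : 0 < (1 - t ^ 2) * deriv f s ^ 2 + deriv g s ^ 2) :
    ‖deriv (deriv (Tdeform f g t)) s‖ ^ 2 * ((1 - t ^ 2) * deriv f s ^ 2 + deriv g s ^ 2)
      = t ^ 2 * deriv (deriv f) s ^ 2 * ((1 - t ^ 2) * deriv f s ^ 2 + deriv g s ^ 2)
        + ((1 - t ^ 2) * deriv f s * deriv (deriv f) s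
            + deriv g s * deriv (deriv g) s) ^ 2 := by
  have hf1 : ContDiff ℝ 1 (deriv f) := by
    have := (contDiff_succ_iff_deriv (n := 1)).mp (by exact_mod_cast hf)
    exact this.2.2
  have hg1 : ContDiff ℝ 1 (deriv g) := by
    have := (contDiff_succ_iff_deriv (n := 1)).mp (by exact_mod_cast hg)
    exact this.2.2
  have hdf : Differentiable ℝ f := hf.differentiable (by norm_num)
  have hdf' : Differentiable ℝ (deriv f) := hf1.differentiable (by norm_num)
  have hdg' : Differentiable ℝ (deriv g) := hg1.differentiable (by norm_num)
  set φ : ℝ → ℝ := fun u => Real.sqrt ((1 - t ^ 2) * deriv f u ^ 2 + deriv g u ^ 2) with hφ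
  have hφcont : Continuous φ :=
    Real.continuous_sqrt.comp
      ((continuous_const.mul ((hf1.continuous).pow 2)).add ((hg1.continuous).pow 2))
  set L : (ℝ × ℝ) →L[ℝ] WithLp 2 (ℝ × ℝ) :=
    (WithLp.prodContinuousLinearEquiv 2 ℝ ℝ ℝ).symm.toContinuousLinearMap with hL
  have hLval : ∀ x : ℝ × ℝ, L x = (WithLp.equiv 2 (ℝ × ℝ)).symm x := fun x => rfl
  have h1 : ∀ x : ℝ, HasDerivAt (Tdeform f g t)
      ((WithLp.equiv 2 (ℝ × ℝ)).symm (t * deriv f x, φ x)) x := by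
    intro x
    have ha : HasDerivAt (fun s => t * f s) (t * deriv f x) x :=
      ((hdf x).hasDerivAt).const_mul t
    have hb : HasDerivAt (fun s => ∫ u in (0:ℝ)..s, φ u) (φ x) x :=
      (hφcont.integral_hasStrictDerivAt 0 x).hasDerivAt
    have := (L.hasFDerivAt).comp_hasDerivAt x (ha.prodMk hb)
    exact this
  have hd1 : deriv (Tdeform f g t)
      = fun x => (WithLp.equiv 2 (ℝ × ℝ)).symm (t * deriv f x, φ x) :=
    funext fun x => (h1 x).deriv
  -- second derivative at s
  have hDd : HasDerivAt (fun u => (1 - t ^ 2) * deriv f u ^ 2 + deriv g u ^ 2)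
      ((1 - t ^ 2) * (2 * deriv f s * deriv (deriv f) s)
        + 2 * deriv g s * deriv (deriv g) s) s := by
    have h1 : HasDerivAt (fun u => deriv f u ^ 2) (2 * deriv f s * deriv (deriv f) s) s := by
      simpa using ((hdf' s).hasDerivAt).fun_pow 2
    have h2 : HasDerivAt (fun u => deriv g u ^ 2) (2 * deriv g s * deriv (deriv g) s) s := by
      simpa using ((hdg' s).hasDerivAt).fun_pow 2
    exact (h1.const_mul _).add h2
  have hb2 : HasDerivAt φ
      (((1 - t ^ 2) * (2 * deriv f s * deriv (deriv f) s)
        + 2 * deriv g s * deriv (deriv g) s)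
        / (2 * Real.sqrt ((1 - t ^ 2) * deriv f s ^ 2 + deriv g s ^ 2))) s :=
    hDd.sqrt hDpos.ne'
  have ha2 : HasDerivAt (fun x => t * deriv f x) (t * deriv (deriv f) s) s :=
    ((hdf' s).hasDerivAt).const_mul t
  have h2 : HasDerivAt (deriv (Tdeform f g t))
      ((WithLp.equiv 2 (ℝ × ℝ)).symm (t * deriv (deriv f) s,
        ((1 - t ^ 2) * (2 * deriv f s * deriv (deriv f) s)
          + 2 * deriv g s * deriv (deriv g) s)
          / (2 * Real.sqrt ((1 - t ^ 2) * deriv f s ^ 2 + deriv g s ^ 2)))) s := by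
    rw [hd1]
    exact (L.hasFDerivAt).comp_hasDerivAt s (ha2.prodMk hb2)
  rw [h2.deriv]
  rw [WithLp.prod_norm_sq_eq_of_L2]
  simp only [WithLp.equiv_symm_apply, WithLp.toLp_fst, WithLp.toLp_snd, Real.norm_eq_abs, sq_abs]
  have h4 : (2 * Real.sqrt ((1 - t ^ 2) * deriv f s ^ 2 + deriv g s ^ 2)) ^ 2
      = 4 * ((1 - t ^ 2) * deriv f s ^ 2 + deriv g s ^ 2) := by
    rw [mul_pow, Real.sq_sqrt hDpos.le]; norm_num
  rw [div_pow, h4]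
  field_simp
  ring

/-- The 'straightforward computation' in the proof of Theorem 4 (thm:profil):
comparing the squared curvatures of the T-deformation of a unit-speed profile
and of its rotation by `α` yields the factorization `K₁² · K₂`; in particular
the curvature functions coincide iff `K₁²·K₂` vanishes identically. -/
theorem curvature_difference_factorization (k : ℝ) (hk : 0 < k) (f g : ℝ → ℝ)
    (hf : ContDiff ℝ 2 f) (hg : ContDiff ℝ 2 g)
    (hunit : ∀ s ∈ Set.Icc (0 : ℝ) k, deriv f s ^ 2 + deriv g s ^ 2 = 1)
    (hg' : ∀ s ∈ Set.Icc (0 : ℝ) k, deriv g s ≠ 0)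
    (α t th : ℝ) (ht : t ∈ Set.Ioo (-1 : ℝ) 1) (hth : th ∈ Set.Ioo (-1 : ℝ) 1)
    (fb gb : ℝ → ℝ)
    (hfb : fb = fun s => Real.cos α * f s + Real.sin α * g s)
    (hgb : gb = fun s => Real.cos α * g s - Real.sin α * f s)
    (D Dh K₁ K₂ : ℝ → ℝ)
    (hD : ∀ s, D s = (1 - t ^ 2) * deriv f s ^ 2 + deriv g s ^ 2)
    (hDh : ∀ s, Dh s = (1 - th ^ 2) * deriv fb s ^ 2 + deriv gb s ^ 2)
    (hK₁ : ∀ s, K₁ s =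
      deriv f s * deriv (deriv g) s - deriv (deriv f) s * deriv g s)
    (hK₂ : ∀ s, K₂ s =
      th ^ 2 * (t ^ 2 - 1) * (Real.sin α * deriv f s - Real.cos α * deriv g s) ^ 2
        + t ^ 2 * (1 - th ^ 2) * deriv g s ^ 2) :
    (∀ s ∈ Set.Icc (0 : ℝ) k,
      (‖deriv (deriv (Tdeform f g t)) s‖ ^ 2
          - ‖deriv (deriv (Tdeform fb gb th)) s‖ ^ 2) * D s * Dh s
        = K₁ s ^ 2 * K₂ s) ∧
    ((∀ s ∈ Set.Icc (0 : ℝ) k,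
        ‖deriv (deriv (Tdeform f g t)) s‖ = ‖deriv (deriv (Tdeform fb gb th)) s‖)
      ↔ (∀ s ∈ Set.Icc (0 : ℝ) k, K₁ s ^ 2 * K₂ s = 0)) := by
  have ht2 : t ^ 2 < 1 := by nlinarith [ht.1, ht.2]
  have hth2 : th ^ 2 < 1 := by nlinarith [hth.1, hth.2]
  have hf1 : ContDiff ℝ 1 (deriv f) := ((contDiff_succ_iff_deriv (n := 1)).mp
    (by exact_mod_cast hf)).2.2
  have hg1 : ContDiff ℝ 1 (deriv g) := ((contDiff_succ_iff_deriv (n := 1)).mp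
    (by exact_mod_cast hg)).2.2
  have hdf : Differentiable ℝ f := hf.differentiable (by norm_num)
  have hdg : Differentiable ℝ g := hg.differentiable (by norm_num)
  have hdf' : Differentiable ℝ (deriv f) := hf1.differentiable (by norm_num)
  have hdg' : Differentiable ℝ (deriv g) := hg1.differentiable (by norm_num)
  have hfbC : ContDiff ℝ 2 fb := by
    rw [hfb]; exact (contDiff_const.mul hf).add (contDiff_const.mul hg)
  have hgbC : ContDiff ℝ 2 gb := by
    rw [hgb]; exact (contDiff_const.mul hg).sub (contDiff_const.mul hf)
  have hfb' : deriv fb = fun u => Real.cos α * deriv f u + Real.sin α * deriv g u := by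
    funext u
    refine HasDerivAt.deriv ?_
    rw [hfb]
    exact ((hdf u).hasDerivAt.const_mul _).add ((hdg u).hasDerivAt.const_mul _)
  have hgb' : deriv gb = fun u => Real.cos α * deriv g u - Real.sin α * deriv f u := by
    funext u
    refine HasDerivAt.deriv ?_
    rw [hgb]
    exact ((hdg u).hasDerivAt.const_mul _).sub ((hdf u).hasDerivAt.const_mul _)
  have main : ∀ s ∈ Set.Icc (0 : ℝ) k,
      (‖deriv (deriv (Tdeform f g t)) s‖ ^ 2
          - ‖deriv (deriv (Tdeform fb gb th)) s‖ ^ 2) * D s * Dh s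
        = K₁ s ^ 2 * K₂ s := by
    intro s hs
    have hr1s : deriv f s ^ 2 + deriv g s ^ 2 = 1 := hunit s hs
    have hcs : Real.cos α ^ 2 + Real.sin α ^ 2 = 1 := Real.cos_sq_add_sin_sq α
    have hr1b : (Real.cos α * deriv f s + Real.sin α * deriv g s) ^ 2
        + (Real.cos α * deriv g s - Real.sin α * deriv f s) ^ 2 = 1 := by
      linear_combination (deriv f s ^ 2 + deriv g s ^ 2) * hcs + hr1s
    -- derivative of the unit-speed relation
    have hcomb : ∀ u : ℝ, HasDerivAt (fun u => deriv f u ^ 2 + deriv g u ^ 2)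
        (2 * deriv f u * deriv (deriv f) u + 2 * deriv g u * deriv (deriv g) u) u := by
      intro u
      have h1 : HasDerivAt (fun u => deriv f u ^ 2)
          (2 * deriv f u * deriv (deriv f) u) u := by simpa using ((hdf' u).hasDerivAt).fun_pow 2
      have h2 : HasDerivAt (fun u => deriv g u ^ 2)
          (2 * deriv g u * deriv (deriv g) u) u := by simpa using ((hdg' u).hasDerivAt).fun_pow 2
      exact h1.add h2
    have hr2 : deriv f s * deriv (deriv f) s + deriv g s * deriv (deriv g) s = 0 := by
      have hdW : derivWithin (fun u => deriv f u ^ 2 + deriv g u ^ 2)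
          (Set.Icc (0 : ℝ) k) s = deriv (fun u => deriv f u ^ 2 + deriv g u ^ 2) s :=
        (hcomb s).differentiableAt.derivWithin ((uniqueDiffOn_Icc hk) s hs)
      have hzero : derivWithin (fun u => deriv f u ^ 2 + deriv g u ^ 2)
          (Set.Icc (0 : ℝ) k) s = 0 := by
        have heq : Set.EqOn (fun u => deriv f u ^ 2 + deriv g u ^ 2)
            (fun _ => (1 : ℝ)) (Set.Icc (0 : ℝ) k) := fun x hx => hunit x hx
        rw [derivWithin_congr heq (hunit s hs)]
        simp
      have hval : deriv (fun u => deriv f u ^ 2 + deriv g u ^ 2) s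
          = 2 * deriv f s * deriv (deriv f) s + 2 * deriv g s * deriv (deriv g) s :=
        (hcomb s).deriv
      rw [hval] at hdW
      rw [hdW] at hzero
      linarith
    have hA2 : deriv (deriv f) s = -(K₁ s * deriv g s) := by
      linear_combination deriv g s * hK₁ s + deriv f s * hr2 - deriv (deriv f) s * hr1s
    have hB2 : deriv (deriv g) s = K₁ s * deriv f s := by
      linear_combination -deriv f s * hK₁ s + deriv g s * hr2 - deriv (deriv g) s * hr1s
    -- positivity of the denominators
    have hDpos : 0 < (1 - t ^ 2) * deriv f s ^ 2 + deriv g s ^ 2 := by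
      nlinarith [sq_nonneg (t * deriv g s)]
    have hDhpos0 : 0 < (1 - th ^ 2) * (Real.cos α * deriv f s + Real.sin α * deriv g s) ^ 2
        + (Real.cos α * deriv g s - Real.sin α * deriv f s) ^ 2 := by
      nlinarith [sq_nonneg (th * (Real.cos α * deriv g s - Real.sin α * deriv f s))]
    have hDhpos : 0 < (1 - th ^ 2) * deriv fb s ^ 2 + deriv gb s ^ 2 := by
      simp only [hfb', hgb']; exact hDhpos0
    -- second derivative of fb, gb
    have hfb'' : deriv (deriv fb) s
        = Real.cos α * deriv (deriv f) s + Real.sin α * deriv (deriv g) s := by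
      rw [hfb']
      exact (((hdf' s).hasDerivAt.const_mul _).add ((hdg' s).hasDerivAt.const_mul _)).deriv
    have hgb'' : deriv (deriv gb) s
        = Real.cos α * deriv (deriv g) s - Real.sin α * deriv (deriv f) s := by
      rw [hgb']
      exact (((hdg' s).hasDerivAt.const_mul _).sub ((hdf' s).hasDerivAt.const_mul _)).deriv
    have e1 := tdeform_norm_sq f g hf hg t s hDpos
    have e2 := tdeform_norm_sq fb gb hfbC hgbC th s hDhpos
    rw [hfb'', hgb''] at e2
    simp only [hfb', hgb'] at e2
    rw [hA2, hB2] at e1 e2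
    rw [hD s, hDh s, hK₂ s]
    simp only [hfb', hgb']
    linear_combination
      ((1 - th ^ 2) * (Real.cos α * deriv f s + Real.sin α * deriv g s) ^ 2
        + (Real.cos α * deriv g s - Real.sin α * deriv f s) ^ 2) * e1
      - ((1 - t ^ 2) * deriv f s ^ 2 + deriv g s ^ 2) * e2
      + (K₁ s ^ 2 * (t ^ 2 * deriv g s ^ 2 *
          ((1 - th ^ 2) * (Real.cos α * deriv f s + Real.sin α * deriv g s) ^ 2
            + (Real.cos α * deriv g s - Real.sin α * deriv f s) ^ 2)
          - th ^ 2 * (1 - t ^ 2)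
            * (Real.cos α * deriv g s - Real.sin α * deriv f s) ^ 2)) * hr1s
      + (K₁ s ^ 2 * (t ^ 2 * (1 - th ^ 2) * deriv g s ^ 2
          - th ^ 2 * (Real.cos α * deriv g s - Real.sin α * deriv f s) ^ 2
            * ((1 - t ^ 2) * deriv f s ^ 2 + deriv g s ^ 2))) * hr1b
  refine ⟨main, ?_, ?_⟩
  · intro h s hs
    rw [← main s hs, h s hs]
    ring
  · intro h s hs
    have h1 := main s hs
    rw [h s hs] at h1
    have hr1s := hunit s hs
    have hDne : D s ≠ 0 := by
      rw [hD s]; nlinarith [sq_nonneg (t * deriv g s)]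
    have hDhne : Dh s ≠ 0 := by
      rw [hDh s]
      have hcs : Real.cos α ^ 2 + Real.sin α ^ 2 = 1 := Real.cos_sq_add_sin_sq α
      have hr1b : (Real.cos α * deriv f s + Real.sin α * deriv g s) ^ 2
          + (Real.cos α * deriv g s - Real.sin α * deriv f s) ^ 2 = 1 := by
        linear_combination (deriv f s ^ 2 + deriv g s ^ 2) * hcs + hr1s
      simp only [hfb', hgb']
      nlinarith [sq_nonneg (th * (Real.cos α * deriv g s - Real.sin α * deriv f s))]
    have hsq : ‖deriv (deriv (Tdeform f g t)) s‖ ^ 2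
        = ‖deriv (deriv (Tdeform fb gb th)) s‖ ^ 2 := by
      rcases mul_eq_zero.mp h1 with h2 | h2
      · rcases mul_eq_zero.mp h2 with h3 | h3
        · linarith
        · exact absurd h3 hDne
      · exact absurd h2 hDhne
    have := congrArg Real.sqrt hsq
    rwa [Real.sqrt_sq (norm_nonneg _), Real.sqrt_sq (norm_nonneg _)] at this
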